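/- Given two stable matchings μ₁ and μ₂, the function assigning to each man the more preferred of μ₁(m) and μ₂(m) is itself a well-defined perfect matching and is stable (the 'join' of μ₁ and μ₂). -/
import Mathlib


open Finset

/-- A stable matching instance: `n` men and `n` women; `mrank m w` is the
(0-indexed) rank of woman `w` in man `m`'s strict preference list (lower = more
preferred); `wrank w m` analogously. -/
structure SMInstance (n : ℕ) where
  mrank : Fin n → Fin n → Fin n
  wrank : Fin n → Fin n → Fin n
  mbij : ∀ m, Function.Bijective (mrank m)
  wbij : ∀ w, Function.Bijective (wrank w)

namespace SMInstance

variable {n : ℕ}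

/-- `(m, w)` is a blocking pair of the perfect matching `μ`. -/
def Blocking (I : SMInstance n) (μ : Equiv.Perm (Fin n)) (m w : Fin n) : Prop :=
  μ m ≠ w ∧ I.mrank m w < I.mrank m (μ m) ∧ I.wrank w m < I.wrank w (μ.symm w)

/-- A matching is stable if it admits no blocking pair. -/
def Stable (I : SMInstance n) (μ : Equiv.Perm (Fin n)) : Prop :=
  ∀ m w, ¬ I.Blocking μ m w

/-- Total (1-indexed) rank of partners over men. -/
def SM (I : SMInstance n) (μ : Equiv.Perm (Fin n)) : ℤ :=
  ∑ m : Fin n, (((I.mrank m (μ m) : ℕ) : ℤ) + 1)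

/-- Total (1-indexed) rank of partners over women. -/
def SW (I : SMInstance n) (μ : Equiv.Perm (Fin n)) : ℤ :=
  ∑ w : Fin n, (((I.wrank w (μ.symm w) : ℕ) : ℤ) + 1)

/-- The sex-equality cost of a matching. -/
def cost (I : SMInstance n) (μ : Equiv.Perm (Fin n)) : ℤ :=
  |I.SM μ - I.SW μ|

end SMInstance

/-- given two stable matchings `μ₁`, `μ₂`, assigning each man the
more preferred of `μ₁ m`, `μ₂ m` is injective, hence a well-defined perfect
matching, and this matching is stable (the join of `μ₁` and `μ₂`). -/
theorem join_is_stable {n : ℕ} (I : SMInstance n)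
    (μ₁ μ₂ : Equiv.Perm (Fin n)) (h₁ : I.Stable μ₁) (h₂ : I.Stable μ₂) :
    Function.Injective
        (fun m => if I.mrank m (μ₁ m) ≤ I.mrank m (μ₂ m) then μ₁ m else μ₂ m) ∧
      ∃ σ : Equiv.Perm (Fin n),
        (∀ m, σ m = if I.mrank m (μ₁ m) ≤ I.mrank m (μ₂ m) then μ₁ m else μ₂ m) ∧
        I.Stable σ := by
  classical
  set f : Fin n → Fin n :=
    fun m => if I.mrank m (μ₁ m) ≤ I.mrank m (μ₂ m) then μ₁ m else μ₂ m with hf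
  have hmem : ∀ m, f m = μ₁ m ∨ f m = μ₂ m := by
    intro m; simp only [hf]; split <;> simp
  have hbest : ∀ m, I.mrank m (f m) ≤ I.mrank m (μ₁ m) ∧
      I.mrank m (f m) ≤ I.mrank m (μ₂ m) := by
    intro m; simp only [hf]; split
    · exact ⟨le_refl _, by assumption⟩
    · exact ⟨le_of_lt (lt_of_not_ge (by assumption)), le_refl _⟩
  -- key lemma: the configuration in the injectivity argument is impossible
  have key : ∀ m m' w, m ≠ m' → μ₁ m = w → μ₂ m' = w →
      I.mrank m w ≤ I.mrank m (μ₂ m) → I.mrank m' w < I.mrank m' (μ₁ m') → False := by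
    intro m m' w hne h1 h2 hm hm'
    rcases lt_trichotomy (I.wrank w m) (I.wrank w m') with hw | hw | hw
    · -- (m, w) blocks μ₂
      refine h₂ m w ⟨?_, ?_, ?_⟩
      · intro h; exact hne (μ₂.injective (h.trans h2.symm))
      · refine lt_of_le_of_ne hm (fun h => ?_)
        exact hne (μ₂.injective (((I.mbij m).injective h).symm.trans h2.symm))
      · rwa [show μ₂.symm w = m' from μ₂.symm_apply_eq.mpr h2.symm]
    · exact hne ((I.wbij w).injective hw)
    · -- (m', w) blocks μ₁
      refine h₁ m' w ⟨?_, hm', ?_⟩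
      · intro h; exact hne (μ₁.injective (h1.trans h.symm))
      · rwa [show μ₁.symm w = m from μ₁.symm_apply_eq.mpr h1.symm]
  have hinj : Function.Injective f := by
    intro a b hab
    by_contra hne
    rcases hmem a with ha | ha <;> rcases hmem b with hb | hb
    · exact hne (μ₁.injective ((ha.symm.trans hab).trans hb))
    · -- f a = μ₁ a, f b = μ₂ b
      have h1 : μ₁ a = f a := ha.symm
      have h2 : μ₂ b = f a := hb.symm.trans hab.symm
      have hlt : I.mrank b (f a) < I.mrank b (μ₁ b) := by
        refine lt_of_le_of_ne (by rw [hab]; exact (hbest b).1) (fun h => ?_)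
        exact hne (μ₁.injective (h1.trans ((I.mbij b).injective h)))
      exact key a b (f a) hne h1 h2 (ha ▸ (hbest a).2) hlt
    · -- f a = μ₂ a, f b = μ₁ b
      have h1 : μ₁ b = f a := hb.symm.trans hab.symm
      have h2 : μ₂ a = f a := ha.symm
      have hlt : I.mrank a (f a) < I.mrank a (μ₁ a) := by
        refine lt_of_le_of_ne (ha ▸ (hbest a).1) (fun h => ?_)
        have : f a = μ₁ a := (I.mbij a).injective h
        exact hne (μ₁.injective (this.symm.trans h1.symm))
      exact key b a (f a) (Ne.symm hne) h1 h2 (by rw [hab]; exact (hbest b).2) hlt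
    · exact hne (μ₂.injective ((ha.symm.trans hab).trans hb))
  have hbij : Function.Bijective f := Finite.injective_iff_bijective.mp hinj
  refine ⟨hinj, Equiv.ofBijective f hbij, fun m => rfl, ?_⟩
  rintro m w ⟨hne, hlt, hw⟩
  set σ := Equiv.ofBijective f hbij with hσ
  have hσm : ∀ x, σ x = f x := fun x => rfl
  have hm' : f (σ.symm w) = w := by rw [← hσm]; exact σ.apply_symm_apply w
  rcases hmem (σ.symm w) with h | h
  · refine h₁ m w ⟨?_, lt_of_lt_of_le hlt (hbest m).1, ?_⟩
    · intro hmw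
      have : m = σ.symm w := μ₁.injective (hmw.trans (h.symm.trans hm').symm)
      exact hne (by rw [this, hσm, hm'])
    · rwa [show μ₁.symm w = σ.symm w from μ₁.symm_apply_eq.mpr (h.symm.trans hm').symm]
  · refine h₂ m w ⟨?_, lt_of_lt_of_le hlt (hbest m).2, ?_⟩
    · intro hmw
      have : m = σ.symm w := μ₂.injective (hmw.trans (h.symm.trans hm').symm)
      exact hne (by rw [this, hσm, hm'])
    · rwa [show μ₂.symm w = σ.symm w from μ₂.symm_apply_eq.mpr (h.symm.trans hm').symm]
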